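/- Let n ≥ 2, let η ∈ M_{2n+1}(ℝ) be the diagonal matrix diag(−1, 1, …, 1), and let so(1,2n) := {A ∈ M_{2n+1}(ℝ) : Aᵀη + ηA = 0}. Let j₀ = [[0, −I_n],[I_n, 0]] ∈ M_{2n}(ℝ), and set 𝔭 := {[[0, uᵀ],[u, 0]] : u ∈ ℝ^{2n}} and 𝔮 := {[[0,0],[0,B]] : B ∈ M_{2n}(ℝ) skew-symmetric with Bj₀ = −j₀B}. Define the linear map J₀⁻ : so(1,2n) → so(1,2n) by J₀⁻([[0, uᵀ],[u, B]]) := [[0, −(j₀u)ᵀ],[−j₀u, (1/2)(j₀B − Bj₀)]], and N^{J₀⁻}(A,A') := [J₀⁻A, J₀⁻A'] − J₀⁻[J₀⁻A, A'] − J₀⁻[A, J₀⁻A'] − [A, A'] (matrix commutators). Then the linear span of {N^{J₀⁻}(A, A') : A, A' ∈ 𝔭 + 𝔮} equals 𝔭 ⊕ 𝔮. -/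

import Mathlib

open Matrix

noncomputable section

/-- Block index type: `Unit ⊕ (Fin n ⊕ Fin n)`, the first summand corresponding to the
`x⁰`-direction and the second to `ℝ^{2n}`. -/
abbrev twIdx (n : ℕ) := Unit ⊕ (Fin n ⊕ Fin n)

/-- The standard complex structure `j₀ = [[0, -Iₙ],[Iₙ, 0]]` on `ℝ^{2n}`. -/
def j0 (n : ℕ) : Matrix (Fin n ⊕ Fin n) (Fin n ⊕ Fin n) ℝ :=
  Matrix.fromBlocks 0 (-1) 1 0

/-- The Lorentz form `η = diag(-1, 1, …, 1)` on `ℝ^{1,2n}`. -/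
def lorentzEta (n : ℕ) : Matrix (twIdx n) (twIdx n) ℝ :=
  Matrix.fromBlocks (-1) 0 0 1

/-- The Lie algebra `so(1,2n) = {A : Aᵀ η + η A = 0}`, as a set of matrices. -/
def soSet (n : ℕ) : Set (Matrix (twIdx n) (twIdx n) ℝ) :=
  {A | Aᵀ * lorentzEta n + lorentzEta n * A = 0}

/-- The subspace `𝔭 = {[[0, uᵀ],[u, 0]] : u ∈ ℝ^{2n}}`. -/
def pSet (n : ℕ) : Set (Matrix (twIdx n) (twIdx n) ℝ) :=
  {M | ∃ u : Matrix (Fin n ⊕ Fin n) Unit ℝ, M = Matrix.fromBlocks 0 uᵀ u 0}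

/-- The subspace `𝔮 = {[[0,0],[0,B]] : B skew-symmetric, B j₀ = -j₀ B}`. -/
def qSet (n : ℕ) : Set (Matrix (twIdx n) (twIdx n) ℝ) :=
  {M | ∃ B : Matrix (Fin n ⊕ Fin n) (Fin n ⊕ Fin n) ℝ,
    Bᵀ = -B ∧ B * j0 n = -(j0 n * B) ∧ M = Matrix.fromBlocks 0 0 0 B}

/-- The map `J₀⁻` sending `[[0, uᵀ],[u, B]]` to `[[0, -(j₀u)ᵀ],[-j₀u, (1/2)(j₀B - Bj₀)]]`. -/
def Jminus (n : ℕ) (A : Matrix (twIdx n) (twIdx n) ℝ) : Matrix (twIdx n) (twIdx n) ℝ :=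
  Matrix.fromBlocks 0 (-(j0 n * A.toBlocks₂₁)ᵀ) (-(j0 n * A.toBlocks₂₁))
    ((1/2 : ℝ) • (j0 n * A.toBlocks₂₂ - A.toBlocks₂₂ * j0 n))

/-- The algebraic Nijenhuis tensor of `J₀⁻`, the brackets being matrix commutators. -/
def nijJminus (n : ℕ) (A A' : Matrix (twIdx n) (twIdx n) ℝ) :
    Matrix (twIdx n) (twIdx n) ℝ :=
  (Jminus n A * Jminus n A' - Jminus n A' * Jminus n A)
    - Jminus n (Jminus n A * A' - A' * Jminus n A)
    - Jminus n (A * Jminus n A' - Jminus n A' * A)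
    - (A * A' - A' * A)

namespace Stmt18

variable (n : ℕ)

abbrev V (n : ℕ) := Matrix (Fin n ⊕ Fin n) Unit ℝ
abbrev M2 (n : ℕ) := Matrix (Fin n ⊕ Fin n) (Fin n ⊕ Fin n) ℝ

lemma j0_sq : j0 n * j0 n = -1 := by
  simp only [j0, fromBlocks_multiply]
  rw [← fromBlocks_one, fromBlocks_neg]
  simp

lemma j0_tr : (j0 n)ᵀ = -(j0 n) := by
  simp only [j0, fromBlocks_transpose, fromBlocks_neg]
  simp

def Fm (u : V n) (B : M2 n) : Matrix (twIdx n) (twIdx n) ℝ :=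
  Matrix.fromBlocks 0 uᵀ u B


lemma nij_master (u v : V n) (B C : M2 n)
    (hBs : Bᵀ = -B) (hCs : Cᵀ = -C)
    (hB : B * j0 n = -(j0 n * B)) (hC : C * j0 n = -(j0 n * C)) :
    nijJminus n (Fm n u B) (Fm n v C)
      = Fm n ((4:ℝ) • (C * u - B * v))
          ((-2:ℝ) • ((u * vᵀ - v * uᵀ) + j0 n * (u * vᵀ - v * uᵀ) * j0 n)) := by
  have hB2 : ∀ X : M2 n, B * (j0 n * X) = -(j0 n * (B * X)) := fun X => by
    rw [← Matrix.mul_assoc, hB, Matrix.neg_mul, Matrix.mul_assoc]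
  have hC2 : ∀ X : M2 n, C * (j0 n * X) = -(j0 n * (C * X)) := fun X => by
    rw [← Matrix.mul_assoc, hC, Matrix.neg_mul, Matrix.mul_assoc]
  have hBv : ∀ X : V n, B * (j0 n * X) = -(j0 n * (B * X)) := fun X => by
    rw [← Matrix.mul_assoc, hB, Matrix.neg_mul, Matrix.mul_assoc]
  have hCv : ∀ X : V n, C * (j0 n * X) = -(j0 n * (C * X)) := fun X => by
    rw [← Matrix.mul_assoc, hC, Matrix.neg_mul, Matrix.mul_assoc]
  have hj2 : ∀ X : M2 n, j0 n * (j0 n * X) = -X := fun X => by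
    rw [← Matrix.mul_assoc, j0_sq, Matrix.neg_mul, Matrix.one_mul]
  have hjv : ∀ X : V n, j0 n * (j0 n * X) = -X := fun X => by
    rw [← Matrix.mul_assoc, j0_sq, Matrix.neg_mul, Matrix.one_mul]
  have hBT2 : Bᵀ * j0 n = -(j0 n * Bᵀ) := by
    rw [hBs, Matrix.neg_mul, hB, neg_neg, Matrix.mul_neg, neg_neg]
  simp only [nijJminus, Jminus, Fm, sub_eq_add_neg, fromBlocks_multiply,
    toBlocks_fromBlocks₂₁, toBlocks_fromBlocks₂₂, fromBlocks_neg, fromBlocks_add,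
    fromBlocks_smul, fromBlocks_inj]
  refine ⟨?_, ?_, ?_, ?_⟩ <;>
  · simp only [Matrix.transpose_mul, Matrix.transpose_neg, Matrix.transpose_smul,
      Matrix.transpose_add, transpose_sub, Matrix.transpose_transpose, transpose_zero,
      j0_tr, hBs, hCs,
      Matrix.mul_assoc, Matrix.mul_add, Matrix.add_mul, Matrix.neg_mul, Matrix.mul_neg,
      Matrix.smul_mul, Matrix.mul_smul, Matrix.mul_zero, Matrix.zero_mul,
      Matrix.mul_one, Matrix.one_mul,
      hB, hC, hB2, hC2, hBv, hCv, hj2, hjv, j0_sq, hBT2,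
      smul_neg, smul_add, neg_neg, add_zero, zero_add, neg_zero, smul_zero]
    module


/-- The direct sum `𝔭 ⊕ 𝔮` as a submodule. -/
def pqSub : Submodule ℝ (Matrix (twIdx n) (twIdx n) ℝ) where
  carrier := {M | ∃ u B, Bᵀ = -B ∧ B * j0 n = -(j0 n * B) ∧ M = Fm n u B}
  add_mem' := by
    rintro M M' ⟨u, B, h1, h2, rfl⟩ ⟨u', B', h1', h2', rfl⟩
    refine ⟨u + u', B + B', by rw [transpose_add, h1, h1']; abel, ?_, ?_⟩
    · rw [Matrix.add_mul, h2, h2', Matrix.mul_add]; abel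
    · simp [Fm, fromBlocks_add]
  zero_mem' := ⟨0, 0, by simp, by simp, by simp [Fm]⟩
  smul_mem' := by
    rintro c M ⟨u, B, h1, h2, rfl⟩
    refine ⟨c • u, c • B, by rw [transpose_smul, h1, smul_neg], ?_, ?_⟩
    · rw [Matrix.smul_mul, h2, Matrix.mul_smul, smul_neg]
    · simp [Fm, fromBlocks_smul]

lemma span_pq : Submodule.span ℝ (pSet n ∪ qSet n) = pqSub n := by
  apply le_antisymm
  · rw [Submodule.span_le]
    rintro M (⟨u, rfl⟩ | ⟨B, h1, h2, rfl⟩)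
    · exact ⟨u, 0, by simp, by simp, rfl⟩
    · exact ⟨0, B, h1, h2, by simp [Fm]⟩
  · rintro M ⟨u, B, h1, h2, rfl⟩
    have h : Fm n u B = Matrix.fromBlocks 0 uᵀ u 0 + Matrix.fromBlocks 0 0 0 B := by
      rw [fromBlocks_add]; simp [Fm]
    rw [h]
    exact add_mem (Submodule.subset_span (Or.inl ⟨u, rfl⟩))
      (Submodule.subset_span (Or.inr ⟨B, h1, h2, rfl⟩))


/-- `u ↦ [[0,uᵀ],[u,0]]` as a linear map. -/
def Pmap : V n →ₗ[ℝ] Matrix (twIdx n) (twIdx n) ℝ where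
  toFun u := Fm n u 0
  map_add' u v := by simp [Fm, fromBlocks_add, transpose_add]
  map_smul' c u := by simp [Fm, fromBlocks_smul, transpose_smul]

/-- `T ↦ [[0,0],[0, -2((T-Tᵀ) + j₀(T-Tᵀ)j₀)]]` as a linear map. -/
def Qmap : M2 n →ₗ[ℝ] Matrix (twIdx n) (twIdx n) ℝ where
  toFun T := Matrix.fromBlocks 0 0 0
    ((-2:ℝ) • ((T - Tᵀ) + j0 n * (T - Tᵀ) * j0 n))
  map_add' T T' := by
    rw [fromBlocks_add]
    simp only [add_zero, fromBlocks_inj, true_and]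
    rw [transpose_add]
    simp only [Matrix.mul_add, Matrix.add_mul, Matrix.mul_sub, Matrix.sub_mul]
    module
  map_smul' c T := by
    rw [RingHom.id_apply, fromBlocks_smul]
    simp only [smul_zero, fromBlocks_inj, true_and]
    rw [transpose_smul]
    simp only [Matrix.mul_sub, Matrix.sub_mul, Matrix.mul_smul, Matrix.smul_mul]
    module

/-- standard basis column vector. -/
def colE (i : Fin n ⊕ Fin n) : V n := Matrix.single i () (1:ℝ)

lemma mul_colE (M : M2 n) (i : Fin n ⊕ Fin n) (a : Fin n ⊕ Fin n) (b : Unit) :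
    (M * colE n i) a b = M a i := by
  simp [colE, Matrix.mul_apply, Matrix.single, Matrix.of_apply]

lemma colE_mul_colE_tr (i j : Fin n ⊕ Fin n) :
    colE n i * (colE n j)ᵀ = Matrix.single i j (1:ℝ) := by
  ext a b
  simp only [colE, Matrix.mul_apply, Matrix.single, Matrix.of_apply,
    Matrix.transpose_apply]
  rw [Finset.sum_eq_single ()] <;> simp
  split_ifs <;> simp_all


lemma stdBasisMatrix_tr {m p : Type*} [DecidableEq m] [DecidableEq p] (i : m) (j : p) (c : ℝ) :
    (Matrix.single i j c)ᵀ = Matrix.single j i c := by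
  ext a b
  simp [Matrix.single, and_comm]

lemma j0_j0_mul (X : M2 n) : j0 n * (j0 n * X) = -X := by
  rw [← Matrix.mul_assoc, j0_sq, Matrix.neg_mul, Matrix.one_mul]

lemma skew_part_skew (D : M2 n) (hD : Dᵀ = -D) :
    ((-2:ℝ) • (D + j0 n * D * j0 n))ᵀ = -((-2:ℝ) • (D + j0 n * D * j0 n)) := by
  rw [transpose_smul, transpose_add, Matrix.transpose_mul, Matrix.transpose_mul, j0_tr, hD]
  simp only [Matrix.neg_mul, Matrix.mul_neg, neg_neg, Matrix.mul_assoc, smul_add, smul_neg]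
  module

lemma skew_part_anti (D : M2 n) :
    ((-2:ℝ) • (D + j0 n * D * j0 n)) * j0 n
      = -(j0 n * ((-2:ℝ) • (D + j0 n * D * j0 n))) := by
  simp only [Matrix.smul_mul, Matrix.mul_smul, Matrix.add_mul, Matrix.mul_add,
    Matrix.mul_assoc, j0_sq, j0_j0_mul, Matrix.mul_neg, Matrix.mul_one, smul_add, smul_neg]
  module


def Nset : Set (Matrix (twIdx n) (twIdx n) ℝ) :=
  {w | ∃ A A' : Matrix (twIdx n) (twIdx n) ℝ,
    A ∈ Submodule.span ℝ (pSet n ∪ qSet n) ∧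
    A' ∈ Submodule.span ℝ (pSet n ∪ qSet n) ∧
    w = nijJminus n A A'}

lemma Pmap_apply (u : V n) : Pmap n u = Fm n u 0 := rfl

lemma Qmap_apply (T : M2 n) : Qmap n T = Matrix.fromBlocks 0 0 0
    ((-2:ℝ) • ((T - Tᵀ) + j0 n * (T - Tᵀ) * j0 n)) := rfl

lemma Fm_p_mem (u : V n) : Fm n u 0 ∈ Submodule.span ℝ (pSet n ∪ qSet n) :=
  Submodule.subset_span (Or.inl ⟨u, rfl⟩)

lemma Fm_q_mem (C : M2 n) (hCs : Cᵀ = -C) (hC : C * j0 n = -(j0 n * C)) :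
    Fm n 0 C ∈ Submodule.span ℝ (pSet n ∪ qSet n) :=
  Submodule.subset_span (Or.inr ⟨C, hCs, hC, by simp [Fm]⟩)

lemma Pmap_mul_mem (C : M2 n) (hCs : Cᵀ = -C) (hC : C * j0 n = -(j0 n * C)) (u : V n) :
    Fm n (C * u) 0 ∈ Submodule.span ℝ (Nset n) := by
  have e : nijJminus n (Fm n u 0) (Fm n 0 C) = (4:ℝ) • Fm n (C * u) 0 := by
    rw [nij_master n u 0 0 C (by simp) hCs (by simp) hC]
    simp [Fm, fromBlocks_smul]
  have h4 : (4:ℝ) • Fm n (C * u) 0 ∈ Submodule.span ℝ (Nset n) := by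
    rw [← e]
    exact Submodule.subset_span ⟨_, _, Fm_p_mem n u, Fm_q_mem n C hCs hC, rfl⟩
  have h := Submodule.smul_mem _ ((4:ℝ)⁻¹) h4
  rwa [smul_smul, inv_mul_cancel₀ (by norm_num), one_smul] at h

lemma Qgen_mem (i j : Fin n ⊕ Fin n) :
    Qmap n (Matrix.single i j (1:ℝ)) ∈ Submodule.span ℝ (Nset n) := by
  have e : nijJminus n (Fm n (colE n i) 0) (Fm n (colE n j) 0)
      = Qmap n (Matrix.single i j (1:ℝ)) := by
    rw [nij_master n (colE n i) (colE n j) 0 0 (by simp) (by simp) (by simp) (by simp)]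
    rw [Qmap_apply, stdBasisMatrix_tr, ← colE_mul_colE_tr n i j, ← colE_mul_colE_tr n j i]
    simp [Fm]
  rw [← e]
  exact Submodule.subset_span ⟨_, _, Fm_p_mem n _, Fm_p_mem n _, rfl⟩

theorem stmt_18' (hn : 2 ≤ n) :
    Submodule.span ℝ (Nset n) = Submodule.span ℝ (pSet n ∪ qSet n) := by
  apply le_antisymm
  · rw [Submodule.span_le]
    rintro w ⟨A, A', hA, hA', rfl⟩
    rw [span_pq] at hA hA'
    obtain ⟨u, B, hBs, hB, rfl⟩ := hA
    obtain ⟨v, C, hCs, hC, rfl⟩ := hA'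
    rw [SetLike.mem_coe, span_pq, nij_master n u v B C hBs hCs hB hC]
    exact ⟨_, _, skew_part_skew n _ (by simp [transpose_sub, Matrix.transpose_mul, neg_sub]),
      skew_part_anti n _, rfl⟩
  · rw [Submodule.span_le]
    rintro M (⟨u, rfl⟩ | ⟨B, hBs, hB, rfl⟩)
    · -- 𝔭-generators
      have key : ∀ i, Fm n (colE n i) 0 ∈ Submodule.span ℝ (Nset n) := by
        intro i
        haveI : Nontrivial (Fin n) := by
          refine ⟨⟨0, by omega⟩, ⟨1, by omega⟩, ?_⟩
          simp [Fin.ext_iff]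
        obtain (k | k) := i
        · obtain ⟨l, hl⟩ := exists_ne k
          set X := Matrix.single k l (1:ℝ) - Matrix.single l k 1 with hX
          have hXs : Xᵀ = -X := by
            rw [hX, transpose_sub, stdBasisMatrix_tr, stdBasisMatrix_tr, neg_sub]
          set C := Matrix.fromBlocks X 0 0 (-X) with hCdef
          have hCs : Cᵀ = -C := by
            rw [hCdef, fromBlocks_transpose, fromBlocks_neg]
            simp [Matrix.transpose_neg, hXs]
          have hC : C * j0 n = -(j0 n * C) := by
            rw [hCdef, j0, fromBlocks_multiply, fromBlocks_multiply, fromBlocks_neg]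
            simp
          have hcol : C * colE n (Sum.inl l) = colE n (Sum.inl k) := by
            ext a b
            rw [mul_colE]
            obtain (a | a) := a <;>
              simp [hCdef, hX, colE, Matrix.fromBlocks, Matrix.single, hl.symm]
          rw [← hcol]
          exact Pmap_mul_mem n C hCs hC _
        · obtain ⟨l, hl⟩ := exists_ne k
          set X := Matrix.single k l (1:ℝ) - Matrix.single l k 1 with hX
          have hXs : Xᵀ = -X := by
            rw [hX, transpose_sub, stdBasisMatrix_tr, stdBasisMatrix_tr, neg_sub]
          set C := Matrix.fromBlocks 0 X X 0 with hCdef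
          have hCs : Cᵀ = -C := by
            rw [hCdef, fromBlocks_transpose, fromBlocks_neg]
            simp [Matrix.transpose_neg, hXs]
          have hC : C * j0 n = -(j0 n * C) := by
            rw [hCdef, j0, fromBlocks_multiply, fromBlocks_multiply, fromBlocks_neg]
            simp
          have hcol : C * colE n (Sum.inl l) = colE n (Sum.inr k) := by
            ext a b
            rw [mul_colE]
            obtain (a | a) := a <;>
              simp [hCdef, hX, colE, Matrix.fromBlocks, Matrix.single, hl.symm]
          rw [← hcol]
          exact Pmap_mul_mem n C hCs hC _
      have hle : Submodule.span ℝ (Set.range (Matrix.stdBasis ℝ (Fin n ⊕ Fin n) Unit))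
          ≤ Submodule.comap (Pmap n) (Submodule.span ℝ (Nset n)) := by
        rw [Submodule.span_le]
        rintro _ ⟨⟨i, ⟨⟩⟩, rfl⟩
        simp only [SetLike.mem_coe, Submodule.mem_comap, Matrix.stdBasis_eq_single]
        exact key i
      have hu : u ∈ Submodule.comap (Pmap n) (Submodule.span ℝ (Nset n)) := by
        apply hle
        rw [(Matrix.stdBasis ℝ (Fin n ⊕ Fin n) Unit).span_eq]
        trivial
      exact hu
    · -- 𝔮-generators
      have hle : Submodule.span ℝ
            (Set.range (Matrix.stdBasis ℝ (Fin n ⊕ Fin n) (Fin n ⊕ Fin n)))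
          ≤ Submodule.comap (Qmap n) (Submodule.span ℝ (Nset n)) := by
        rw [Submodule.span_le]
        rintro _ ⟨⟨i, j⟩, rfl⟩
        simp only [SetLike.mem_coe, Submodule.mem_comap, Matrix.stdBasis_eq_single]
        exact Qgen_mem n i j
      have hB' : Qmap n B ∈ Submodule.span ℝ (Nset n) := by
        apply hle
        rw [(Matrix.stdBasis ℝ (Fin n ⊕ Fin n) (Fin n ⊕ Fin n)).span_eq]
        trivial
      have hjBj : j0 n * B * j0 n = B := by
        rw [Matrix.mul_assoc, hB, Matrix.mul_neg, j0_j0_mul, neg_neg]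
      have e : Qmap n B = (-8:ℝ) • Matrix.fromBlocks (0 : Matrix Unit Unit ℝ) 0 0 B := by
        rw [Qmap_apply, fromBlocks_smul]
        simp only [smul_zero, fromBlocks_inj, true_and, and_true]
        rw [hBs, sub_neg_eq_add]
        rw [Matrix.mul_add, Matrix.add_mul, hjBj]
        module
      have h := Submodule.smul_mem _ ((-8:ℝ)⁻¹) hB'
      rw [e, smul_smul, inv_mul_cancel₀ (by norm_num), one_smul] at h
      exact h

end Stmt18

/-- For `n ≥ 2`, the linear span of the values `N^{J₀⁻}(A, A')` for
`A, A'` ranging over `𝔭 + 𝔮` equals `𝔭 ⊕ 𝔮`.  (This underlies the maximal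
non-integrability of `J⁻` on the twistor space over hyperbolic space.) -/
theorem stmt_18 (n : ℕ) (hn : 2 ≤ n) :
    Submodule.span ℝ {w : Matrix (twIdx n) (twIdx n) ℝ |
        ∃ A A' : Matrix (twIdx n) (twIdx n) ℝ,
          A ∈ Submodule.span ℝ (pSet n ∪ qSet n) ∧
          A' ∈ Submodule.span ℝ (pSet n ∪ qSet n) ∧
          w = nijJminus n A A'} =
      Submodule.span ℝ (pSet n ∪ qSet n) := by
  exact Stmt18.stmt_18' n hn

end
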